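/- For g(p) = n₊(A₁⁽¹⁾)(p) with p ≥ 5 prime and 3 ≤ k ≤ p, the cocycle φ_k = Σ_{i=1}^{s(k)} a_{i,k-i} e^{i,k-i} is a coboundary: φ_k = d¹(e^k). -/

import Mathlib

noncomputable section

/-- The structure constants: `aZ i j` is 1, 0, or -1 according as
`j - i` is congruent to 1, 0, or -1 modulo 3. -/
def aZ (i j : ℕ) : ℤ :=
  if ((j : ℤ) - (i : ℤ)) % 3 = 1 then 1
  else if ((j : ℤ) - (i : ℤ)) % 3 = 0 then 0
  else -1

variable (F : Type*) [Field F] (p : ℕ)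

/-- The structure constants viewed in the field `F`. -/
def aF (i j : ℕ) : F := ((aZ i j : ℤ) : F)

/-- The basis vector `e_k` (for `1 ≤ k ≤ p`) of the truncated algebra
`g(p) = n₊(A₁⁽¹⁾)(p)`, modelled on `Fin p → F`; `E k = 0` for `k` out of range. -/
def E (k : ℕ) : Fin p → F :=
  if h : 1 ≤ k ∧ k ≤ p then Pi.single (⟨k - 1, by omega⟩ : Fin p) 1 else 0

/-- The `k`-th coordinate (coefficient of `e_k`) of an element of `g(p)`. -/
def coord (k : ℕ) (g : Fin p → F) : F :=
  if h : 1 ≤ k ∧ k ≤ p then g ⟨k - 1, by omega⟩ else 0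

/-- The Lie bracket of `g(p)`: `[e_i, e_j] = a_{i,j} e_{i+j}`, interpreted as `0`
when `i + j > p`. -/
def br (f g : Fin p → F) : Fin p → F :=
  ∑ i : Fin p, ∑ j : Fin p,
    (f i * g j * aF F (i.1 + 1) (j.1 + 1)) • E F p (i.1 + 1 + (j.1 + 1))

/-- `s(k)`: `k/2 - 1` if `k` is even, `(k-1)/2` if `k` is odd. -/
def sdeg (k : ℕ) : ℕ := if k % 2 = 0 then k / 2 - 1 else (k - 1) / 2

/-- `M(p,k) = 1` if `k ≤ p + 1`, and `k - p` otherwise. -/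
def Mlow (p k : ℕ) : ℕ := if k ≤ p + 1 then 1 else k - p

/-- The 2-cochain `e^{i,j}`, the dual of `e_i ∧ e_j`, as a bilinear form. -/
def wedge (i j : ℕ) (g h : Fin p → F) : F :=
  coord F p i g * coord F p j h - coord F p j g * coord F p i h

/-- The 2-cochain `φ_k = Σ_{i = M(p,k)}^{s(k)} a_{i,k-i} e^{i,k-i}`. -/
def phiC (k : ℕ) (g h : Fin p → F) : F :=
  ∑ i ∈ Finset.Icc (Mlow p k) (sdeg k), aF F i (k - i) * wedge F p i (k - i) g h

/-- The Chevalley–Eilenberg differential `d²` with trivial coefficients. -/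
def d2 (φ : (Fin p → F) → (Fin p → F) → F) (g h f : Fin p → F) : F :=
  φ (br F p g h) f - φ (br F p g f) h + φ (br F p h f) g

/-- The space `C² = (Λ² g(p))*`, modelled as the span of the `e^{i,j}`. -/
def C2span : Submodule F ((Fin p → F) → (Fin p → F) → F) :=
  Submodule.span F {w | ∃ i j : ℕ, 1 ≤ i ∧ i < j ∧ j ≤ p ∧ w = wedge F p i j}

lemma aZ_swap (i j : ℕ) : aZ j i = - aZ i j := by
  unfold aZ; split_ifs <;> omega

lemma aZ_self (i : ℕ) : aZ i i = 0 := by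
  unfold aZ; split_ifs <;> omega

lemma aF_swap (i j : ℕ) : aF F j i = - aF F i j := by
  unfold aF; rw [aZ_swap]; push_cast; ring

lemma aF_self (i : ℕ) : aF F i i = 0 := by
  unfold aF; rw [aZ_self]; norm_cast

lemma E_apply (m : ℕ) (idx : Fin p) : E F p m idx = if m = idx.1 + 1 then 1 else 0 := by
  unfold E
  by_cases hm : 1 ≤ m ∧ m ≤ p
  · rw [dif_pos hm, Pi.single_apply]
    have hiff : (idx = (⟨m - 1, by omega⟩ : Fin p)) ↔ (m = idx.1 + 1) := by
      rw [Fin.ext_iff]; simp; omega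
    rw [if_congr hiff rfl rfl]
  · rw [dif_neg hm]
    have hlt := idx.2
    have : m ≠ idx.1 + 1 := by omega
    simp [this]

lemma br_coord (k : ℕ) (hk1 : 1 ≤ k) (hkp : k ≤ p) (g h : Fin p → F) :
    coord F p k (br F p g h) = ∑ t ∈ Finset.Ioc 0 (k-1),
      aF F t (k - t) * (coord F p t g * coord F p (k - t) h) := by
  have hp1 : 0 < p := by omega
  unfold coord br
  rw [dif_pos ⟨hk1, hkp⟩]
  simp only [Finset.sum_apply, Pi.smul_apply, smul_eq_mul, E_apply]
  have key : ∀ i : Fin p, ∀ j : Fin p,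
      (g i * h j * aF F (i.1 + 1) (j.1 + 1)) *
        (if i.1 + 1 + (j.1 + 1) = (⟨k-1, by omega⟩ : Fin p).1 + 1 then (1:F) else 0)
      = if i.1 + 1 + (j.1 + 1) = k then g i * h j * aF F (i.1+1) (j.1+1) else 0 := by
    intro i j
    simp only [mul_ite, mul_one, mul_zero]
    have : (i.1 + 1 + (j.1 + 1) = (⟨k-1, by omega⟩ : Fin p).1 + 1) ↔ (i.1 + 1 + (j.1+1) = k) := by
      simp; omega
    rw [if_congr this rfl rfl]
  rw [show (∑ i : Fin p, ∑ j : Fin p,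
      (g i * h j * aF F (i.1 + 1) (j.1 + 1)) *
        (if i.1 + 1 + (j.1 + 1) = (⟨k-1, by omega⟩ : Fin p).1 + 1 then (1:F) else 0))
    = ∑ x ∈ (Finset.univ ×ˢ Finset.univ : Finset (Fin p × Fin p)),
        (if x.1.1 + 1 + (x.2.1 + 1) = k then g x.1 * h x.2 * aF F (x.1.1+1) (x.2.1+1) else 0)
    from by rw [Finset.sum_product]; exact Finset.sum_congr rfl fun i _ =>
      Finset.sum_congr rfl fun j _ => key i j]
  rw [← Finset.sum_filter]
  refine Finset.sum_nbij' (fun x => x.1.1 + 1)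
    (fun t => ((⟨(t-1) % p, Nat.mod_lt _ hp1⟩ : Fin p), (⟨(k-t-1) % p, Nat.mod_lt _ hp1⟩ : Fin p)))
    ?_ ?_ ?_ ?_ ?_
  · intro x hx
    simp only [Finset.mem_filter] at hx
    simp only [Finset.mem_Ioc]
    omega
  · intro t ht
    simp only [Finset.mem_Ioc] at ht
    simp only [Finset.mem_filter, Finset.mem_product, Finset.mem_univ, true_and]
    rw [Nat.mod_eq_of_lt (by omega), Nat.mod_eq_of_lt (by omega)]
    omega
  · intro x hx
    simp only [Finset.mem_filter] at hx
    ext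
    · simp; rw [Nat.mod_eq_of_lt (by omega)]
    · simp; rw [Nat.mod_eq_of_lt (by omega)]; omega
  · intro t ht
    simp only [Finset.mem_Ioc] at ht
    simp only
    rw [Nat.mod_eq_of_lt (by omega)]
    omega
  · intro x hx
    simp only [Finset.mem_filter, Finset.mem_product] at hx
    have h2 : x.2.1 = k - (x.1.1 + 1) - 1 := by omega
    have hle : x.1.1 + 1 ≤ p := by have := x.1.2; omega
    have hle2 : k - (x.1.1+1) ≤ p := by omega
    rw [dif_pos ⟨by omega, hle⟩, dif_pos ⟨by omega, hle2⟩]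
    have e1 : (⟨x.1.1 + 1 - 1, by omega⟩ : Fin p) = x.1 := by ext; simp
    have e2 : (⟨k - (x.1.1+1) - 1, by omega⟩ : Fin p) = x.2 := by ext; simp; omega
    rw [e1, e2]
    have e3 : x.2.1 + 1 = k - (x.1.1 + 1) := by omega
    rw [e3]
    ring

/-- For `3 ≤ k ≤ p`, the cocycle `φ_k` is a coboundary: `φ_k = d¹(e^k)`. -/
theorem phi_k_is_coboundary (p : ℕ) (hp : p.Prime) (h5 : 5 ≤ p)
    (F : Type*) [Field F] [CharP F p] (k : ℕ) (hk3 : 3 ≤ k) (hk : k ≤ p) :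
    ∀ g h : Fin p → F, phiC F p k g h = coord F p k (br F p g h) := by
  intro g h
  have hM : Mlow p k = 1 := by unfold Mlow; rw [if_pos (by omega)]
  set s := sdeg k with hsdef
  have hs2 : (k % 2 = 0 ∧ s = k/2 - 1) ∨ (k % 2 = 1 ∧ s = (k-1)/2) := by
    rw [hsdef]; unfold sdeg; split_ifs with hh
    · exact Or.inl ⟨hh, rfl⟩
    · exact Or.inr ⟨by omega, rfl⟩
  have hs1 : 1 ≤ s := by omega
  have hssum : s ≤ k - s - 1 := by omega
  have hsk : k - s - 1 ≤ k - 1 := by omega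
  rw [br_coord F p k (by omega) hk g h]
  rw [← Finset.sum_Ioc_consecutive
    (fun t => aF F t (k - t) * (coord F p t g * coord F p (k - t) h))
    (Nat.zero_le (k - s - 1)) hsk]
  rw [← Finset.sum_Ioc_consecutive
    (fun t => aF F t (k - t) * (coord F p t g * coord F p (k - t) h))
    (Nat.zero_le s) hssum]
  have hmid : ∑ t ∈ Finset.Ioc s (k - s - 1),
      aF F t (k - t) * (coord F p t g * coord F p (k - t) h) = 0 := by
    rcases hs2 with ⟨he, hes⟩ | ⟨ho, hos⟩
    · have h1 : k - s - 1 = s + 1 := by omega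
      rw [h1, Finset.sum_Ioc_succ_top (le_refl s), Finset.Ioc_self, Finset.sum_empty]
      have h2 : k - (s + 1) = s + 1 := by omega
      rw [h2, aF_self]
      ring
    · have h1 : k - s - 1 = s := by omega
      rw [h1, Finset.Ioc_self, Finset.sum_empty]
  have htail : ∑ t ∈ Finset.Ioc (k - s - 1) (k - 1),
      aF F t (k - t) * (coord F p t g * coord F p (k - t) h)
      = ∑ t ∈ Finset.Ioc 0 s,
        (- aF F t (k - t)) * (coord F p (k - t) g * coord F p t h) := by
    refine Finset.sum_nbij' (fun t => k - t) (fun t => k - t) ?_ ?_ ?_ ?_ ?_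
    · intro t ht; simp only [Finset.mem_Ioc] at *; omega
    · intro t ht; simp only [Finset.mem_Ioc] at *; omega
    · intro t ht; simp only [Finset.mem_Ioc] at ht; omega
    · intro t ht; simp only [Finset.mem_Ioc] at ht; omega
    · intro t ht
      simp only [Finset.mem_Ioc] at ht
      rw [show k - (k - t) = t from by omega, aF_swap]
  rw [hmid, htail, add_zero, ← Finset.sum_add_distrib]
  unfold phiC wedge
  rw [hM, show Finset.Icc 1 s = Finset.Ioc 0 s from by rw [← Finset.Icc_add_one_left_eq_Ioc]; rfl]
  refine Finset.sum_congr rfl fun i hi => ?_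
  ring
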